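/- Let ρ ∈ L¹(ℝ²) with ∫_{ℝ²} ρ(x) dx = 0, and suppose the double integral ∫_{ℝ²}∫_{ℝ²} (−ln|x−y|) ρ(y) ρ(x) dy dx exists (i.e., ∫∫ |ln|x−y|| |ρ(y)| |ρ(x)| dy dx < ∞). Then ∫_{ℝ²}∫_{ℝ²} (−ln|x−y|) ρ(y) ρ(x) dy dx ≥ 0. -/

import Mathlib

open MeasureTheory Real Set

noncomputable section

abbrev E2 : Type := EuclideanSpace ℝ (Fin 2)



lemma intExpIoi {s : ℝ} (hs : 0 < s) : ∫ t in Ioi (0:ℝ), Real.exp (-(s*t)) = 1/s := by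
  have := integral_comp_mul_left_Ioi (fun u => Real.exp (-u)) 0 hs
  simp only [mul_zero, smul_eq_mul] at this
  rw [this, integral_exp_neg_Ioi_zero]
  simp [one_div]

lemma intExpIoc {t : ℝ} (ht : 0 < t) {a b : ℝ} (hab : a ≤ b) :
    ∫ s in Ioc a b, Real.exp (-(s*t)) = (Real.exp (-(a*t)) - Real.exp (-(b*t))) / t := by
  rw [← intervalIntegral.integral_of_le hab]
  have h1 : ∫ s in a..b, Real.exp (-(s*t)) = t⁻¹ • ∫ u in a*t..b*t, Real.exp (-u) := by
    exact intervalIntegral.integral_comp_mul_right (fun u => Real.exp (-u)) ht.ne'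
  rw [h1, intervalIntegral.integral_comp_neg (fun u => Real.exp u), integral_exp]
  field_simp
  rw [smul_eq_mul, ← mul_assoc, mul_one_div_cancel ht.ne', one_mul]

lemma frullani_prod_integrable {a b : ℝ} (ha : 0 < a) (hab : a ≤ b) :
    Integrable (fun p : ℝ × ℝ => Real.exp (-(p.2 * p.1)))
      ((volume.restrict (Ioi (0:ℝ))).prod (volume.restrict (Ioc a b))) := by
  have hmeas : AEStronglyMeasurable (fun p : ℝ × ℝ => Real.exp (-(p.2 * p.1)))
      ((volume.restrict (Ioi (0:ℝ))).prod (volume.restrict (Ioc a b))) :=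
    (Continuous.aestronglyMeasurable (by continuity))
  rw [integrable_prod_iff hmeas]
  constructor
  · refine Filter.Eventually.of_forall (fun t => ?_)
    exact (continuous_exp.comp (by continuity)).integrableOn_Ioc
  · have hbound : Integrable (fun t : ℝ => (b - a) * Real.exp (-(a * t)))
        (volume.restrict (Ioi (0:ℝ))) := by
      have := exp_neg_integrableOn_Ioi 0 ha
      simpa [neg_mul] using this.const_mul (b - a)
    refine Integrable.mono' hbound (hmeas.norm.integral_prod_right') ?_
    filter_upwards [ae_restrict_mem measurableSet_Ioi] with t ht
    have ht0 : 0 < t := ht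
    have h1 : ∀ s ∈ Ioc a b, ‖Real.exp (-(s * t))‖ ≤ Real.exp (-(a * t)) := by
      intro s hs
      rw [Real.norm_eq_abs, abs_of_pos (exp_pos _)]
      exact exp_le_exp.2 (by nlinarith [hs.1.le])
    have h2 : ∫ s in Ioc a b, ‖Real.exp (-(s * t))‖ ≤ ∫ s in Ioc a b, Real.exp (-(a * t)) := by
      refine setIntegral_mono_on ((continuous_exp.comp (by continuity)).norm.integrableOn_Ioc)
        (integrableOn_const (by simp [Real.volume_Ioc]))
        measurableSet_Ioc h1
    calc ‖∫ s in Ioc a b, ‖Real.exp (-(s * t))‖‖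
        = ∫ s in Ioc a b, ‖Real.exp (-(s * t))‖ := by
          rw [Real.norm_eq_abs, abs_of_nonneg]
          exact setIntegral_nonneg measurableSet_Ioc (fun s _ => norm_nonneg _)
      _ ≤ ∫ s in Ioc a b, Real.exp (-(a * t)) := h2
      _ = (b - a) * Real.exp (-(a * t)) := by
          rw [setIntegral_const, Real.volume_real_Ioc, smul_eq_mul,
            max_eq_left (by linarith)]

lemma frullani_integrableOn {a b : ℝ} (ha : 0 < a) (hab : a ≤ b) :
    IntegrableOn (fun t => (Real.exp (-(a*t)) - Real.exp (-(b*t)))/t) (Ioi (0:ℝ)) := by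
  have h := (frullani_prod_integrable ha hab).integral_prod_left
  refine h.congr ?_
  filter_upwards [ae_restrict_mem measurableSet_Ioi] with t ht
  exact (intExpIoc ht hab).symm ▸ rfl

lemma frullani_value {a b : ℝ} (ha : 0 < a) (hab : a ≤ b) :
    ∫ t in Ioi (0:ℝ), (Real.exp (-(a*t)) - Real.exp (-(b*t)))/t = Real.log (b/a) := by
  have hb : 0 < b := lt_of_lt_of_le ha hab
  have hswap := integral_integral_swap (f := fun (t s : ℝ) => Real.exp (-(s * t)))
    (frullani_prod_integrable ha hab)
  have hL : ∫ t in Ioi (0:ℝ), ∫ s in Ioc a b, Real.exp (-(s*t))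
      = ∫ t in Ioi (0:ℝ), (Real.exp (-(a*t)) - Real.exp (-(b*t)))/t := by
    refine setIntegral_congr_ae measurableSet_Ioi ?_
    filter_upwards with t ht
    exact intExpIoc ht hab
  have hR : ∫ s in Ioc a b, ∫ t in Ioi (0:ℝ), Real.exp (-(s*t)) = Real.log (b/a) := by
    have h1 : ∫ s in Ioc a b, ∫ t in Ioi (0:ℝ), Real.exp (-(s*t)) = ∫ s in Ioc a b, 1/s := by
      refine setIntegral_congr_ae measurableSet_Ioc ?_
      filter_upwards with s hs
      exact intExpIoi (lt_of_lt_of_le ha hs.1.le)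
    rw [h1, ← intervalIntegral.integral_of_le hab, integral_one_div]
    intro h0
    rcases h0 with h0
    have := h0.1
    rw [min_eq_left hab] at this
    linarith [h0.1, h0.2]
  rw [← hL, hswap, hR]

lemma logRepr_integrableOn {r : ℝ} (hr : 0 < r) :
    IntegrableOn (fun t => (Real.exp (-(r^2*t)) - Real.exp (-t))/(2*t)) (Ioi (0:ℝ)) := by
  rcases le_total (r^2) 1 with h | h
  · have H := (frullani_integrableOn (pow_pos hr 2) h).const_mul 2⁻¹
    refine H.congr (Filter.Eventually.of_forall (fun t => ?_))
    simp only [one_mul]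
    ring
  · have H := ((frullani_integrableOn one_pos h).const_mul 2⁻¹).neg
    refine H.congr (Filter.Eventually.of_forall (fun t => ?_))
    simp only [Pi.neg_apply, one_mul]
    ring

lemma logRepr_value {r : ℝ} (hr : 0 < r) :
    ∫ t in Ioi (0:ℝ), (Real.exp (-(r^2*t)) - Real.exp (-t))/(2*t) = - Real.log r := by
  have hlog : Real.log (r^2) = 2 * Real.log r := by
    rw [← Real.rpow_natCast r 2, Real.log_rpow hr]; norm_num
  rcases le_total (r^2) 1 with h | h
  · have H := frullani_value (pow_pos hr 2) h
    have e1 : (fun t => (Real.exp (-(r^2*t)) - Real.exp (-t))/(2*t))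
        = fun t => 2⁻¹ * ((Real.exp (-(r^2*t)) - Real.exp (-(1*t)))/t) := by
      funext t; simp only [one_mul]; ring
    rw [e1, integral_const_mul, H, Real.log_div one_ne_zero (by positivity), Real.log_one, hlog]
    ring
  · have H := frullani_value one_pos h
    have e1 : (fun t => (Real.exp (-(r^2*t)) - Real.exp (-t))/(2*t))
        = fun t => -(2⁻¹ * ((Real.exp (-(1*t)) - Real.exp (-(r^2*t)))/t)) := by
      funext t; simp only [one_mul]; ring
    rw [e1, integral_neg, integral_const_mul, H, div_one, hlog]
    ring

lemma logRepr_abs {r : ℝ} (hr : 0 < r) :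
    ∫ t in Ioi (0:ℝ), |(Real.exp (-(r^2*t)) - Real.exp (-t))/(2*t)| = |Real.log r| := by
  rcases le_total r 1 with h | h
  · have hr2 : r^2 ≤ 1 := by nlinarith
    have e1 : ∫ t in Ioi (0:ℝ), |(Real.exp (-(r^2*t)) - Real.exp (-t))/(2*t)|
        = ∫ t in Ioi (0:ℝ), (Real.exp (-(r^2*t)) - Real.exp (-t))/(2*t) := by
      refine setIntegral_congr_ae measurableSet_Ioi ?_
      filter_upwards with t ht
      rw [abs_of_nonneg]
      apply div_nonneg _ (by linarith [(show (0:ℝ) < t from ht).le] : (0:ℝ) ≤ 2*t)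
      have : r^2 * t ≤ t := by nlinarith [(show (0:ℝ) < t from ht).le]
      simp only [sub_nonneg, exp_le_exp]
      linarith
    rw [e1, logRepr_value hr, abs_of_nonpos (Real.log_nonpos hr.le h)]
  · have hr2 : 1 ≤ r^2 := by nlinarith
    have e1 : ∫ t in Ioi (0:ℝ), |(Real.exp (-(r^2*t)) - Real.exp (-t))/(2*t)|
        = ∫ t in Ioi (0:ℝ), -((Real.exp (-(r^2*t)) - Real.exp (-t))/(2*t)) := by
      refine setIntegral_congr_ae measurableSet_Ioi ?_
      filter_upwards with t ht
      rw [abs_of_nonpos]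
      apply div_nonpos_of_nonpos_of_nonneg _ (by linarith [(show (0:ℝ) < t from ht).le] : (0:ℝ) ≤ 2*t)
      have : t ≤ r^2 * t := by nlinarith [(show (0:ℝ) < t from ht).le]
      simp only [sub_nonpos, exp_le_exp]
      linarith
    rw [e1, integral_neg, logRepr_value hr, neg_neg,
      abs_of_nonneg (Real.log_nonneg h)]



lemma gaussIntegrable {c : ℝ} (hc : 0 < c) :
    Integrable (fun w : E2 => Real.exp (-(c * ‖w‖^2))) := by
  have h := GaussianFourier.integrable_cexp_neg_mul_sq_norm_add (V := E2)
    (b := (c:ℂ)) (by simpa using hc) 0 0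
  have := h.norm
  refine this.congr (Filter.Eventually.of_forall (fun w => ?_))
  simp only [zero_mul, add_zero, Complex.norm_exp]
  rw [show (-(c:ℂ) * (‖w‖:ℂ)^2) = ((-(c * ‖w‖^2) : ℝ) : ℂ) by push_cast; ring, Complex.ofReal_re]

lemma gaussInt {c : ℝ} (hc : 0 < c) :
    ∫ w : E2, Real.exp (-(c * ‖w‖^2)) = π / c := by
  have h := GaussianFourier.integral_rexp_neg_mul_sq_norm (V := E2) hc
  rw [show ((Module.finrank ℝ E2 : ℝ) / 2) = 1 by
    rw [finrank_euclideanSpace_fin]; norm_num, Real.rpow_one] at h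
  rw [← h]
  congr 1 with w
  rw [neg_mul]

lemma gaussConv {t : ℝ} (ht : 0 < t) (x y : E2) :
    ∫ w : E2, Real.exp (-(2*t*‖x-w‖^2)) * Real.exp (-(2*t*‖y-w‖^2))
      = (π/(4*t)) * Real.exp (-(t*‖x-y‖^2)) := by
  have key : ∀ w : E2, Real.exp (-(2*t*‖x-w‖^2)) * Real.exp (-(2*t*‖y-w‖^2))
      = Real.exp (-(4*t*‖((2:ℝ)⁻¹ • (x+y)) - w‖^2)) * Real.exp (-(t*‖x-y‖^2)) := by
    intro w
    rw [← Real.exp_add, ← Real.exp_add]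
    congr 1
    have hpar := parallelogram_law_with_norm ℝ (x - w) (y - w)
    have h1 : x - w + (y - w) = (2:ℝ) • (((2:ℝ)⁻¹ • (x+y)) - w) := by
      rw [smul_sub, smul_smul]
      norm_num
      module
    have h2 : x - w - (y - w) = x - y := by abel
    rw [h1, h2, norm_smul] at hpar
    simp only [Real.norm_ofNat] at hpar
    nlinarith [hpar]
  simp_rw [key]
  rw [integral_mul_const, integral_sub_left_eq_self
    (fun w : E2 => Real.exp (-(4*t*‖w‖^2))) volume ((2:ℝ)⁻¹ • (x+y)), gaussInt (by linarith : 0 < 4*t)]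

lemma gaussSlice {t : ℝ} (ht : 0 < t) (x : E2) :
    Integrable (fun w : E2 => Real.exp (-(2*t*‖x-w‖^2))) :=
  (gaussIntegrable (by linarith : (0:ℝ) < 2*t)).comp_sub_left x

lemma gaussPD {t : ℝ} (ht : 0 < t) {ρ : E2 → ℝ} (hm : Measurable ρ) (hρ : Integrable ρ) :
    0 ≤ ∫ z : E2 × E2, Real.exp (-(t * ‖z.1 - z.2‖^2)) * (ρ z.1 * ρ z.2) := by
  set g : E2 → E2 → ℝ := fun x w => Real.exp (-(2*t*‖x-w‖^2)) with hg
  set H : (E2 × E2) × E2 → ℝ :=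
    fun p => (g p.1.1 p.2 * ρ p.1.1) * (g p.1.2 p.2 * ρ p.1.2) with hH
  have c1 : Measurable fun p : (E2 × E2) × E2 => g p.1.1 p.2 := by
    apply (Real.continuous_exp.comp (by fun_prop : Continuous fun p : (E2 × E2) × E2 =>
      -(2*t*‖p.1.1-p.2‖^2))).measurable
  have c2 : Measurable fun p : (E2 × E2) × E2 => g p.1.2 p.2 := by
    apply (Real.continuous_exp.comp (by fun_prop : Continuous fun p : (E2 × E2) × E2 =>
      -(2*t*‖p.1.2-p.2‖^2))).measurable
  have hmeasH : Measurable H :=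
    ((c1.mul (hm.comp (measurable_fst.comp measurable_fst))).mul
      (c2.mul (hm.comp (measurable_snd.comp measurable_fst))))
  have hgpos : ∀ x w : E2, 0 < g x w := fun x w => Real.exp_pos _
  have hgle : ∀ x w : E2, g x w ≤ 1 := fun x w => by
    rw [hg]; simp only
    rw [show (1:ℝ) = Real.exp 0 by simp]
    apply Real.exp_le_exp.2
    have : 0 ≤ 2*t*‖x-w‖^2 := by positivity
    linarith
  have hintH : Integrable H ((volume : Measure (E2 × E2)).prod volume) := by
    rw [integrable_prod_iff hmeasH.aestronglyMeasurable]
    constructor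
    · refine Filter.Eventually.of_forall (fun z => ?_)
      refine Integrable.mono' ((gaussSlice ht z.1).const_mul |ρ z.1 * ρ z.2|)
        ((hmeasH.comp measurable_prodMk_left).aestronglyMeasurable) ?_
      refine Filter.Eventually.of_forall (fun w => ?_)
      have h1 : ‖H (z, w)‖ = (g z.1 w * g z.2 w) * |ρ z.1 * ρ z.2| := by
        rw [Real.norm_eq_abs, hH]
        simp only
        rw [show (g z.1 w * ρ z.1) * (g z.2 w * ρ z.2)
          = (g z.1 w * g z.2 w) * (ρ z.1 * ρ z.2) by ring, abs_mul,
          abs_of_pos (mul_pos (hgpos _ _) (hgpos _ _))]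
      rw [h1]
      have := mul_le_of_le_one_right (le_of_lt (hgpos z.1 w)) (hgle z.2 w)
      calc (g z.1 w * g z.2 w) * |ρ z.1 * ρ z.2| ≤ g z.1 w * |ρ z.1 * ρ z.2| := by
            apply mul_le_mul_of_nonneg_right this (abs_nonneg _)
        _ = |ρ z.1 * ρ z.2| * g z.1 w := by ring
    · refine Integrable.mono' (((hρ.abs).mul_prod (hρ.abs)).const_mul (π/(4*t)))
        (hmeasH.norm.aestronglyMeasurable.integral_prod_right') ?_
      refine Filter.Eventually.of_forall (fun z => ?_)
      have h1 : ∀ w, ‖H (z, w)‖ = (g z.1 w * g z.2 w) * |ρ z.1 * ρ z.2| := by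
        intro w
        rw [Real.norm_eq_abs, hH]
        simp only
        rw [show (g z.1 w * ρ z.1) * (g z.2 w * ρ z.2)
          = (g z.1 w * g z.2 w) * (ρ z.1 * ρ z.2) by ring, abs_mul,
          abs_of_pos (mul_pos (hgpos _ _) (hgpos _ _))]
      have h2 : ∫ w, ‖H (z, w)‖
          = ((π/(4*t)) * Real.exp (-(t*‖z.1-z.2‖^2))) * |ρ z.1 * ρ z.2| := by
        simp_rw [h1]
        rw [integral_mul_const, gaussConv ht]
      rw [h2, Real.norm_eq_abs, abs_of_nonneg (by positivity)]
      have he : Real.exp (-(t*‖z.1-z.2‖^2)) ≤ 1 := by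
        rw [show (1:ℝ) = Real.exp 0 by simp]
        apply Real.exp_le_exp.2
        have : 0 ≤ t*‖z.1-z.2‖^2 := by positivity
        linarith
      have hπ : 0 < π/(4*t) := by positivity
      calc ((π/(4*t)) * Real.exp (-(t*‖z.1-z.2‖^2))) * |ρ z.1 * ρ z.2|
          ≤ ((π/(4*t)) * 1) * |ρ z.1 * ρ z.2| := by
            apply mul_le_mul_of_nonneg_right _ (abs_nonneg _)
            exact mul_le_mul_of_nonneg_left he hπ.le
        _ = (π/(4*t)) * (|ρ z.1| * |ρ z.2|) := by rw [abs_mul]; ring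
  have key : ∀ z : E2 × E2, Real.exp (-(t*‖z.1-z.2‖^2)) * (ρ z.1 * ρ z.2)
      = (4*t/π) * ∫ w, H (z, w) := by
    intro z
    have h3 : ∫ w, H (z, w) = (∫ w, g z.1 w * g z.2 w) * (ρ z.1 * ρ z.2) := by
      rw [← integral_mul_const]
      congr 1 with w
      rw [hH]; simp only; ring
    rw [h3, gaussConv ht]
    have hπ : (π : ℝ) ≠ 0 := Real.pi_ne_zero
    field_simp
  calc (0:ℝ) ≤ (4*t/π) * ∫ w : E2, (∫ x : E2, g x w * ρ x)^2 := by
        apply mul_nonneg (by positivity)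
        exact integral_nonneg (fun w => sq_nonneg _)
    _ = (4*t/π) * ∫ w : E2, ∫ z : E2 × E2, H (z, w) := by
        congr 1
        refine integral_congr_ae (Filter.Eventually.of_forall (fun w => ?_))
        show (∫ x : E2, g x w * ρ x)^2 = ∫ z : E2 × E2, H (z, w)
        rw [show ∫ z : E2 × E2, H (z, w)
          = ∫ z : E2 × E2, (fun x => g x w * ρ x) z.1 * (fun x => g x w * ρ x) z.2 by rfl,
          MeasureTheory.Measure.volume_eq_prod,
          integral_prod_mul (fun x : E2 => g x w * ρ x) (fun x : E2 => g x w * ρ x), sq]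
    _ = (4*t/π) * ∫ z : E2 × E2, ∫ w : E2, H (z, w) := by
        congr 1
        exact (integral_integral_swap (f := fun z w => H (z, w)) hintH).symm
    _ = ∫ z : E2 × E2, Real.exp (-(t * ‖z.1 - z.2‖^2)) * (ρ z.1 * ρ z.2) := by
        rw [← integral_const_mul]
        refine integral_congr_ae (Filter.Eventually.of_forall (fun z => ?_))
        exact (key z).symm

lemma prodInt {ρ : E2 → ℝ} (hρ : Integrable ρ) :
    Integrable (fun z : E2 × E2 => ρ z.1 * ρ z.2) := by
  rw [MeasureTheory.Measure.volume_eq_prod E2 E2]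
  exact hρ.mul_prod hρ

lemma sliceNonneg {t : ℝ} (ht : 0 < t) {ρ : E2 → ℝ} (hm : Measurable ρ)
    (hρ : Integrable ρ) (hzero : ∫ x : E2, ρ x = 0) :
    0 ≤ ∫ z : E2 × E2, (Real.exp (-(‖z.1 - z.2‖^2 * t)) - Real.exp (-t))/(2*t)
        * (ρ z.1 * ρ z.2) := by
  have hprod := prodInt hρ
  have hint1 : Integrable (fun z : E2 × E2 =>
      Real.exp (-(‖z.1 - z.2‖^2 * t)) * (ρ z.1 * ρ z.2)) := by
    refine hprod.bdd_mul (c := 1) ?_ (Filter.Eventually.of_forall (fun z => ?_))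
    · exact (Real.continuous_exp.comp (by fun_prop :
        Continuous fun z : E2 × E2 => -(‖z.1 - z.2‖^2 * t))).aestronglyMeasurable
    · rw [Real.norm_eq_abs, abs_of_pos (Real.exp_pos _)]
      rw [show (1:ℝ) = Real.exp 0 by simp]
      apply Real.exp_le_exp.2
      have : 0 ≤ ‖z.1 - z.2‖^2 * t := by positivity
      linarith
  have e0 : ∫ z : E2 × E2, ρ z.1 * ρ z.2 = 0 := by
    rw [MeasureTheory.Measure.volume_eq_prod E2 E2, integral_prod_mul, hzero, mul_zero]
  have split : ∫ z : E2 × E2, (Real.exp (-(‖z.1 - z.2‖^2 * t)) - Real.exp (-t))/(2*t)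
        * (ρ z.1 * ρ z.2)
      = (1/(2*t)) * (∫ z : E2 × E2, Real.exp (-(‖z.1 - z.2‖^2 * t)) * (ρ z.1 * ρ z.2))
        - (Real.exp (-t)/(2*t)) * (∫ z : E2 × E2, ρ z.1 * ρ z.2) := by
    calc ∫ z : E2 × E2, (Real.exp (-(‖z.1 - z.2‖^2 * t)) - Real.exp (-t))/(2*t)
          * (ρ z.1 * ρ z.2)
        = ∫ z : E2 × E2, ((1/(2*t)) * (Real.exp (-(‖z.1 - z.2‖^2 * t)) * (ρ z.1 * ρ z.2))
            - (Real.exp (-t)/(2*t)) * (ρ z.1 * ρ z.2)) := by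
          congr 1 with z; ring
      _ = _ := by
          rw [integral_sub (hint1.const_mul _) (hprod.const_mul _),
            integral_const_mul, integral_const_mul]
  rw [split, e0, mul_zero, sub_zero]
  apply mul_nonneg (by positivity)
  have h := gaussPD ht hm hρ
  have : (fun z : E2 × E2 => Real.exp (-(‖z.1 - z.2‖^2 * t)) * (ρ z.1 * ρ z.2))
      = fun z : E2 × E2 => Real.exp (-(t * ‖z.1 - z.2‖^2)) * (ρ z.1 * ρ z.2) := by
    funext z; rw [mul_comm (‖z.1 - z.2‖^2) t]
  rw [this]
  exact h



lemma diag_null : ∀ᵐ z : E2 × E2, z.1 ≠ z.2 := by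
  have hD : MeasurableSet {z : E2 × E2 | z.1 = z.2} :=
    measurableSet_eq_fun measurable_fst measurable_snd
  rw [ae_iff]
  have : {z : E2 × E2 | ¬ z.1 ≠ z.2} = {z : E2 × E2 | z.1 = z.2} := by
    ext z; simp
  rw [this, MeasureTheory.Measure.volume_eq_prod E2 E2, Measure.measure_prod_null hD]
  filter_upwards with x
  have : (Prod.mk x ⁻¹' {z : E2 × E2 | z.1 = z.2}) = {x} := by
    ext y; simp [eq_comm]
  rw [this]
  exact measure_singleton x


def Phi (ρ : E2 → ℝ) (p : (E2 × E2) × ℝ) : ℝ :=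
  (Real.exp (-(‖p.1.1 - p.1.2‖^2 * p.2)) - Real.exp (-p.2))/(2*p.2) * (ρ p.1.1 * ρ p.1.2)

lemma keyPD {ρ : E2 → ℝ} (hm : Measurable ρ) (hρ : Integrable ρ) (hzero : ∫ x : E2, ρ x = 0)
    (hker : Integrable (fun z : E2 × E2 => Real.log ‖z.1 - z.2‖ * ρ z.1 * ρ z.2)) :
    0 ≤ ∫ z : E2 × E2, (-Real.log ‖z.1 - z.2‖) * (ρ z.1 * ρ z.2) := by
  have hslice : ∀ z : E2 × E2, (fun t => Phi ρ (z, t))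
      = fun t => (Real.exp (-(‖z.1 - z.2‖^2 * t)) - Real.exp (-t))/(2*t)
          * (ρ z.1 * ρ z.2) := fun z => rfl
  have mΦ : Measurable (Phi ρ) := by
    unfold Phi
    apply Measurable.mul
    · apply Measurable.div
      · exact ((Real.continuous_exp.comp (by fun_prop :
          Continuous fun p : (E2 × E2) × ℝ => -(‖p.1.1 - p.1.2‖^2 * p.2))).measurable).sub
          ((Real.continuous_exp.comp (by fun_prop :
          Continuous fun p : (E2 × E2) × ℝ => -p.2)).measurable)
      · exact measurable_const.mul measurable_snd
    · exact (hm.comp (measurable_fst.comp measurable_fst)).mul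
        (hm.comp (measurable_snd.comp measurable_fst))
  have hΦint : Integrable (Phi ρ)
      ((volume : Measure (E2 × E2)).prod (volume.restrict (Ioi 0))) := by
    rw [integrable_prod_iff mΦ.aestronglyMeasurable]
    constructor
    · filter_upwards [diag_null] with z hz
      have hr : 0 < ‖z.1 - z.2‖ := by rw [norm_pos_iff]; exact sub_ne_zero_of_ne hz
      rw [hslice z]
      exact (logRepr_integrableOn hr).mul_const _
    · have habs : (fun z : E2 × E2 => ∫ t in Ioi (0:ℝ), ‖Phi ρ (z, t)‖)
          =ᵐ[volume] fun z => ‖Real.log ‖z.1 - z.2‖ * ρ z.1 * ρ z.2‖ := by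
        filter_upwards [diag_null] with z hz
        have hr : 0 < ‖z.1 - z.2‖ := by rw [norm_pos_iff]; exact sub_ne_zero_of_ne hz
        have e1 : ∀ t : ℝ, ‖Phi ρ (z, t)‖
            = |(Real.exp (-(‖z.1 - z.2‖^2 * t)) - Real.exp (-t))/(2*t)| * |ρ z.1 * ρ z.2| := by
          intro t
          rw [show Phi ρ (z, t)
            = (Real.exp (-(‖z.1 - z.2‖^2 * t)) - Real.exp (-t))/(2*t) * (ρ z.1 * ρ z.2)
            from rfl, Real.norm_eq_abs, abs_mul]
        calc ∫ t in Ioi (0:ℝ), ‖Phi ρ (z, t)‖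
            = ∫ t in Ioi (0:ℝ), |(Real.exp (-(‖z.1 - z.2‖^2 * t)) - Real.exp (-t))/(2*t)|
              * |ρ z.1 * ρ z.2| :=
              integral_congr_ae (Filter.Eventually.of_forall (fun t => e1 t))
          _ = (∫ t in Ioi (0:ℝ), |(Real.exp (-(‖z.1 - z.2‖^2 * t)) - Real.exp (-t))/(2*t)|)
              * |ρ z.1 * ρ z.2| := integral_mul_const _ _
          _ = |Real.log ‖z.1 - z.2‖| * |ρ z.1 * ρ z.2| := by rw [logRepr_abs hr]
          _ = ‖Real.log ‖z.1 - z.2‖ * ρ z.1 * ρ z.2‖ := by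
              rw [Real.norm_eq_abs, abs_mul, abs_mul, abs_mul]
              ring
      exact (hker.norm).congr habs.symm
  have hval : ∫ z : E2 × E2, (-Real.log ‖z.1 - z.2‖) * (ρ z.1 * ρ z.2)
      = ∫ z : E2 × E2, ∫ t in Ioi (0:ℝ), Phi ρ (z, t) := by
    refine integral_congr_ae ?_
    filter_upwards [diag_null] with z hz
    have hr : 0 < ‖z.1 - z.2‖ := by rw [norm_pos_iff]; exact sub_ne_zero_of_ne hz
    show (-Real.log ‖z.1 - z.2‖) * (ρ z.1 * ρ z.2) = ∫ t in Ioi (0:ℝ), Phi ρ (z, t)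
    rw [show (∫ t in Ioi (0:ℝ), Phi ρ (z, t))
      = ∫ t in Ioi (0:ℝ), (Real.exp (-(‖z.1 - z.2‖^2 * t)) - Real.exp (-t))/(2*t)
          * (ρ z.1 * ρ z.2) from rfl]
    rw [integral_mul_const, logRepr_value hr]
  have hswap := integral_integral_swap (f := fun (z : E2 × E2) (t : ℝ) => Phi ρ (z, t))
    (μ := (volume : Measure (E2 × E2))) (ν := volume.restrict (Ioi 0)) hΦint
  rw [hval, hswap]
  refine setIntegral_nonneg measurableSet_Ioi (fun t ht => ?_)
  have : (fun z : E2 × E2 => Phi ρ (z, t))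
      = fun z : E2 × E2 => (Real.exp (-(‖z.1 - z.2‖^2 * t)) - Real.exp (-t))/(2*t)
          * (ρ z.1 * ρ z.2) := rfl
  rw [this]
  exact sliceNonneg ht hm hρ hzero

/-- Positive definiteness of the two-dimensional Newtonian kernel `-ln|x-y|` on densities
of zero total charge. -/
theorem stmt7 (ρ : E2 → ℝ) (hρ : Integrable ρ) (hzero : ∫ x : E2, ρ x = 0)
    (hker : Integrable (fun z : E2 × E2 => Real.log ‖z.1 - z.2‖ * ρ z.1 * ρ z.2)) :
    0 ≤ ∫ x : E2, ∫ y : E2, (-Real.log ‖x - y‖) * ρ y * ρ x := by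
  have hsm := hρ.aestronglyMeasurable
  set ρ' : E2 → ℝ := hsm.mk ρ with hρ'def
  have hρ'meas : Measurable ρ' := hsm.stronglyMeasurable_mk.measurable
  have hae : ρ =ᵐ[volume] ρ' := hsm.ae_eq_mk
  have hρ' : Integrable ρ' := hρ.congr hae
  have hzero' : ∫ x : E2, ρ' x = 0 := by rw [← integral_congr_ae hae]; exact hzero
  have hQF : Measure.QuasiMeasurePreserving (Prod.fst : E2 × E2 → E2) volume volume := by
    rw [MeasureTheory.Measure.volume_eq_prod E2 E2]
    exact Measure.quasiMeasurePreserving_fst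
  have hQS : Measure.QuasiMeasurePreserving (Prod.snd : E2 × E2 → E2) volume volume := by
    rw [MeasureTheory.Measure.volume_eq_prod E2 E2]
    exact Measure.quasiMeasurePreserving_snd
  have h1 := hQF.ae_eq_comp hae
  have h2 := hQS.ae_eq_comp hae
  have hker' : Integrable (fun z : E2 × E2 => Real.log ‖z.1 - z.2‖ * ρ' z.1 * ρ' z.2) := by
    refine hker.congr ?_
    filter_upwards [h1, h2] with z e1 e2
    simp only [Function.comp] at e1 e2
    rw [e1, e2]
  have hGint : Integrable (fun z : E2 × E2 => (-Real.log ‖z.1 - z.2‖) * ρ z.2 * ρ z.1) := by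
    refine hker.neg.congr (Filter.Eventually.of_forall (fun z => ?_))
    show -(Real.log ‖z.1 - z.2‖ * ρ z.1 * ρ z.2)
      = (-Real.log ‖z.1 - z.2‖) * ρ z.2 * ρ z.1
    ring
  have hstep : (∫ x : E2, ∫ y : E2, (-Real.log ‖x - y‖) * ρ y * ρ x)
      = ∫ z : E2 × E2, (-Real.log ‖z.1 - z.2‖) * ρ z.2 * ρ z.1 := by
    rw [MeasureTheory.Measure.volume_eq_prod E2 E2]
    exact integral_integral (f := fun x y => (-Real.log ‖x - y‖) * ρ y * ρ x)
      ((MeasureTheory.Measure.volume_eq_prod E2 E2) ▸ hGint)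
  rw [hstep]
  have hswap : ∫ z : E2 × E2, (-Real.log ‖z.1 - z.2‖) * ρ z.2 * ρ z.1
      = ∫ z : E2 × E2, (-Real.log ‖z.1 - z.2‖) * (ρ' z.1 * ρ' z.2) := by
    refine integral_congr_ae ?_
    filter_upwards [h1, h2] with z e1 e2
    simp only [Function.comp] at e1 e2
    rw [e1, e2]
    ring
  rw [hswap]
  exact keyPD hρ'meas hρ' hzero' hker'
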